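/- With the notation of the Gessel–Xin proof, suppose $0 \le s < n$, $0 < r_1 < \cdots < r_s \le n$, $1\le k_i\le b$ for all $i$, and $k_i > a_{r_1} + \cdots + a_{r_s}$ for some $i$. Then the rational function $\mathcal{Q}(b\mid\mathbf{r};\mathbf{k})$ is proper in $x_{r_s}$; more precisely, its degree in $x_{r_s}$ equals $(n-s)(a_{r_1}+\cdots+a_{r_s} - b)$, which is negative. -/

import Mathlib

set_option maxHeartbeats 1000000
set_option synthInstance.maxHeartbeats 400000


open Finset
open scoped Classical

noncomputable section

/-- The field `ℚ(q)(x_0, x_1, x_2, …)` of rational functions. -/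
abbrev FF : Type := FractionRing (MvPolynomial ℕ (RatFunc ℚ))

/-- The variable `x_j` as a rational function. -/
def XX (j : ℕ) : FF := algebraMap (MvPolynomial ℕ (RatFunc ℚ)) FF (MvPolynomial.X j)

/-- The parameter `q` as a rational function. -/
def qq : FF := algebraMap (MvPolynomial ℕ (RatFunc ℚ)) FF (MvPolynomial.C RatFunc.X)

/-- The substitution `E_{𝐫,𝐤}`, which replaces `x_{r i}` by `x_{r s} q^(k s - k i)`
for `i = 0, 1, …, s-1` (and leaves the other variables unchanged). -/
def Esub (s : ℕ) (r k : ℕ → ℕ) : ℕ → FF := fun j =>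
  if h : ∃ i, i < s ∧ r i = j then
    XX (r s) * qq ^ ((k s : ℤ) - (k h.choose : ℤ))
  else XX j

/-- `𝒬(b ∣ 𝐫; 𝐤) = E_{𝐫,𝐤}[𝒬(b) ∏_{i=1}^s (1 - x_0/(x_{r i} q^{k i}))]`, where
`𝒬(b) = ∏_{j=1}^n (q x_j/x_0)_{a_j} / ∏_{c=1}^b (1 - x_0/(x_j q^c))
  ⬝ ∏_{1 ≤ i < j ≤ n} (x_i/x_j)_{a_i} (q x_j/x_i)_{a_j}`:
the factors `∏_{i=1}^s (1 - x_0/(x_{r i} q^{k i}))` cancel exactly the factors of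
the denominator of `𝒬(b)` that are taken to zero by `E_{𝐫,𝐤}`, and `E_{𝐫,𝐤}` is
applied to the resulting rational function. -/
def Qrk (n s b : ℕ) (a r k : ℕ → ℕ) : FF :=
  (∏ j ∈ Icc 1 n,
    ((∏ c ∈ range (a j), (1 - qq ^ (c+1) * Esub s r k j / Esub s r k 0)) /
     ∏ c ∈ (Icc 1 b).filter (fun c => ¬ ∃ i ∈ Icc 1 s, r i = j ∧ k i = c),
       (1 - Esub s r k 0 / (Esub s r k j * qq ^ c)))) *
  ∏ j ∈ Icc 1 n, ∏ i ∈ Ioo 0 j,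
    ((∏ c ∈ range (a i), (1 - qq ^ c * Esub s r k i / Esub s r k j)) *
     ∏ c ∈ range (a j), (1 - qq ^ (c+1) * Esub s r k j / Esub s r k i))


abbrev PP : Type := MvPolynomial ℕ (RatFunc ℚ)

def ψ : RatFunc ℚ →+* FF := (algebraMap PP FF).comp MvPolynomial.C

def q0 : RatFunc ℚ := RatFunc.X

lemma q0_ne : q0 ≠ 0 := RatFunc.X_ne_zero

lemma alg_inj : Function.Injective (algebraMap PP FF) := IsFractionRing.injective PP FF

lemma qq_eq : qq = ψ q0 := rfl

lemma qq_zpow (z : ℤ) : qq ^ z = algebraMap PP FF (MvPolynomial.C (q0 ^ z)) := by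
  rw [qq_eq, ← map_zpow₀ ψ]; rfl

/-- polynomial giving the variable part of `Esub`. -/
def EPol (s : ℕ) (r : ℕ → ℕ) (j : ℕ) : PP :=
  if ∃ i, i < s ∧ r i = j then MvPolynomial.X (r s) else MvPolynomial.X j

/-- exponent of `q` in `Esub`. -/
def eE (s : ℕ) (r k : ℕ → ℕ) (j : ℕ) : ℤ :=
  if h : ∃ i, i < s ∧ r i = j then (k s : ℤ) - (k h.choose : ℤ) else 0

lemma EPol_ne (s : ℕ) (r : ℕ → ℕ) (j : ℕ) : EPol s r j ≠ 0 := by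
  unfold EPol; split <;> exact MvPolynomial.X_ne_zero _

lemma algEPol_ne (s : ℕ) (r : ℕ → ℕ) (j : ℕ) : algebraMap PP FF (EPol s r j) ≠ 0 := by
  intro h
  exact EPol_ne s r j (alg_inj (by rw [h, map_zero]))

lemma Esub_eq (s : ℕ) (r k : ℕ → ℕ) (j : ℕ) :
    Esub s r k j = algebraMap PP FF (EPol s r j) * qq ^ (eE s r k j) := by
  unfold Esub EPol eE
  split_ifs with h
  · rfl
  · rw [zpow_zero, mul_one]; rfl

/-- the linear polynomial corresponding to the factor `1 - q^γ E i' / E j'`. -/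
def LL (s : ℕ) (r k : ℕ → ℕ) (γ : ℤ) (i' j' : ℕ) : PP :=
  EPol s r j' - MvPolynomial.C (q0 ^ (γ + eE s r k i' - eE s r k j')) * EPol s r i'

lemma qq_ne : qq ≠ 0 := by
  unfold qq
  intro h
  have h2 : (MvPolynomial.C RatFunc.X : PP) = 0 := alg_inj (by rw [h, map_zero])
  rw [MvPolynomial.C_eq_zero] at h2
  exact q0_ne h2

/-- key rewriting of an elementary factor. -/
lemma key (s : ℕ) (r k : ℕ → ℕ) (γ : ℤ) (i' j' : ℕ) :
    1 - qq ^ γ * Esub s r k i' / Esub s r k j' =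
      algebraMap PP FF (LL s r k γ i' j') / algebraMap PP FF (EPol s r j') := by
  have hBne : algebraMap PP FF (EPol s r j') ≠ 0 := algEPol_ne s r j'
  have hR : algebraMap PP FF (LL s r k γ i' j') =
      algebraMap PP FF (EPol s r j') -
        qq ^ (γ + eE s r k i' - eE s r k j') * algebraMap PP FF (EPol s r i') := by
    unfold LL
    rw [RingHom.map_sub, RingHom.map_mul, qq_zpow]
  rw [Esub_eq, Esub_eq, hR, sub_div, div_self hBne]
  congr 1
  have h1 : qq ^ (γ + eE s r k i' - eE s r k j') = qq ^ γ * qq ^ (eE s r k i') / qq ^ (eE s r k j') := by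
    rw [zpow_sub₀ qq_ne, zpow_add₀ qq_ne]
  rw [h1]
  have hq : qq ^ (eE s r k j') ≠ 0 := zpow_ne_zero _ qq_ne
  field_simp


/-- the index set of surviving denominator factors in column `j`. -/
def DJ (s b : ℕ) (r k : ℕ → ℕ) (j : ℕ) : Finset ℕ :=
  (Icc 1 b).filter (fun c => ¬ ∃ i ∈ Icc 1 s, r i = j ∧ k i = c)

def NN (n s b : ℕ) (a r k : ℕ → ℕ) : PP :=
  (∏ j ∈ Icc 1 n, ((∏ c ∈ range (a j), LL s r k ((c:ℤ)+1) j 0) *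
      ∏ _c ∈ DJ s b r k j, EPol s r j)) *
  ∏ j ∈ Icc 1 n, ∏ i ∈ Ioo 0 j, ((∏ c ∈ range (a i), LL s r k (c:ℤ) i j) *
      ∏ c ∈ range (a j), LL s r k ((c:ℤ)+1) j i)

def DD (n s b : ℕ) (a r k : ℕ → ℕ) : PP :=
  (∏ j ∈ Icc 1 n, ((∏ _c ∈ range (a j), EPol s r 0) *
      ∏ c ∈ DJ s b r k j, LL s r k (-(c:ℤ)) 0 j)) *
  ∏ j ∈ Icc 1 n, ∏ i ∈ Ioo 0 j, ((∏ _c ∈ range (a i), EPol s r j) *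
      ∏ _c ∈ range (a j), EPol s r i)

lemma div4 (x y z w : FF) : (x / y) / (z / w) = (x * w) / (y * z) := by
  rw [div_div_eq_mul_div, div_mul_eq_mul_div, div_div]

lemma key_nat (s : ℕ) (r k : ℕ → ℕ) (γ : ℕ) (i' j' : ℕ) :
    1 - qq ^ γ * Esub s r k i' / Esub s r k j' =
      algebraMap PP FF (LL s r k (γ:ℤ) i' j') / algebraMap PP FF (EPol s r j') := by
  rw [← key s r k (γ:ℤ) i' j', zpow_natCast]

lemma key_den (s : ℕ) (r k : ℕ → ℕ) (γ : ℕ) (i' j' : ℕ) :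
    1 - Esub s r k i' / (Esub s r k j' * qq ^ γ) =
      algebraMap PP FF (LL s r k (-(γ:ℤ)) i' j') / algebraMap PP FF (EPol s r j') := by
  rw [← key s r k (-(γ:ℤ)) i' j']
  congr 1
  rw [zpow_neg, zpow_natCast]
  simp only [div_eq_mul_inv, mul_inv]
  ring

theorem qrk_eq (n s b : ℕ) (a r k : ℕ → ℕ) :
    Qrk n s b a r k = algebraMap PP FF (NN n s b a r k) / algebraMap PP FF (DD n s b a r k) := by
  unfold Qrk NN DD
  have h1 : ∀ j ∈ Icc 1 n,
      ((∏ c ∈ range (a j), (1 - qq ^ (c+1) * Esub s r k j / Esub s r k 0)) /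
       ∏ c ∈ (Icc 1 b).filter (fun c => ¬ ∃ i ∈ Icc 1 s, r i = j ∧ k i = c),
         (1 - Esub s r k 0 / (Esub s r k j * qq ^ c))) =
      algebraMap PP FF ((∏ c ∈ range (a j), LL s r k ((c:ℤ)+1) j 0) *
          ∏ _c ∈ DJ s b r k j, EPol s r j) /
        algebraMap PP FF ((∏ _c ∈ range (a j), EPol s r 0) *
          ∏ c ∈ DJ s b r k j, LL s r k (-(c:ℤ)) 0 j) := by
    intro j _
    have hnum : (∏ c ∈ range (a j), (1 - qq ^ (c+1) * Esub s r k j / Esub s r k 0)) =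
        algebraMap PP FF (∏ c ∈ range (a j), LL s r k ((c:ℤ)+1) j 0) /
          algebraMap PP FF (∏ _c ∈ range (a j), EPol s r 0) := by
      rw [map_prod, map_prod, ← Finset.prod_div_distrib]
      refine Finset.prod_congr rfl fun c _ => ?_
      have := key_nat s r k (c+1) j 0
      rw [show (((c+1:ℕ)):ℤ) = (c:ℤ)+1 by push_cast; ring] at this
      exact this
    have hden : (∏ c ∈ (Icc 1 b).filter (fun c => ¬ ∃ i ∈ Icc 1 s, r i = j ∧ k i = c),
          (1 - Esub s r k 0 / (Esub s r k j * qq ^ c))) =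
        algebraMap PP FF (∏ c ∈ DJ s b r k j, LL s r k (-(c:ℤ)) 0 j) /
          algebraMap PP FF (∏ _c ∈ DJ s b r k j, EPol s r j) := by
      rw [map_prod, map_prod, ← Finset.prod_div_distrib]
      exact Finset.prod_congr rfl fun c _ => key_den s r k c 0 j
    rw [hnum, hden, div4, ← RingHom.map_mul, ← RingHom.map_mul]
  have h2 : ∀ j ∈ Icc 1 n, ∀ i ∈ Ioo 0 j,
      ((∏ c ∈ range (a i), (1 - qq ^ c * Esub s r k i / Esub s r k j)) *
       ∏ c ∈ range (a j), (1 - qq ^ (c+1) * Esub s r k j / Esub s r k i)) =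
      algebraMap PP FF ((∏ c ∈ range (a i), LL s r k (c:ℤ) i j) *
          ∏ c ∈ range (a j), LL s r k ((c:ℤ)+1) j i) /
        algebraMap PP FF ((∏ _c ∈ range (a i), EPol s r j) *
          ∏ _c ∈ range (a j), EPol s r i) := by
    intro j _ i _
    have hA : (∏ c ∈ range (a i), (1 - qq ^ c * Esub s r k i / Esub s r k j)) =
        algebraMap PP FF (∏ c ∈ range (a i), LL s r k (c:ℤ) i j) /
          algebraMap PP FF (∏ _c ∈ range (a i), EPol s r j) := by
      rw [map_prod, map_prod, ← Finset.prod_div_distrib]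
      exact Finset.prod_congr rfl fun c _ => key_nat s r k c i j
    have hB : (∏ c ∈ range (a j), (1 - qq ^ (c+1) * Esub s r k j / Esub s r k i)) =
        algebraMap PP FF (∏ c ∈ range (a j), LL s r k ((c:ℤ)+1) j i) /
          algebraMap PP FF (∏ _c ∈ range (a j), EPol s r i) := by
      rw [map_prod, map_prod, ← Finset.prod_div_distrib]
      refine Finset.prod_congr rfl fun c _ => ?_
      have := key_nat s r k (c+1) j i
      rw [show (((c+1:ℕ)):ℤ) = (c:ℤ)+1 by push_cast; ring] at this
      exact this
    rw [hA, hB, div_mul_div_comm, ← RingHom.map_mul, ← RingHom.map_mul]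
  rw [Finset.prod_congr rfl h1]
  rw [Finset.prod_congr rfl (fun j hj => Finset.prod_congr rfl (h2 j hj))]
  simp only [map_mul, map_prod, Finset.prod_div_distrib, div_mul_div_comm]

-- ------- generic degree lemmas -------
section DegGeneric
variable {R : Type*} [CommRing R] [IsDomain R] {σ : Type*}

theorem degreeOf_mul_eq' (t : σ) (p q : MvPolynomial σ R) (h : p * q ≠ 0) :
    MvPolynomial.degreeOf t (p * q) = MvPolynomial.degreeOf t p + MvPolynomial.degreeOf t q := by
  classical
  obtain ⟨hp, hq⟩ := mul_ne_zero_iff.1 h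
  obtain ⟨u, p', q', rfl, rfl⟩ := MvPolynomial.exists_finset_rename₂ p q
  by_cases ht : t ∈ u
  · let t' : { x // x ∈ u } := ⟨t, ht⟩
    have hcard : Fintype.card { x // x ∈ u } = (u.erase t).card + 1 := by
      have h1 : Fintype.card { x // x ∈ u } = u.card := Fintype.card_coe u
      have h2 : (u.erase t).card = u.card - 1 := Finset.card_erase_of_mem ht
      have : 1 ≤ u.card := Finset.card_pos.2 ⟨t, ht⟩
      omega
    set m := (u.erase t).card
    let e : { x // x ∈ u } ≃ Fin (m + 1) := Fintype.equivFinOfCardEq hcard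
    let f : { x // x ∈ u } → Fin (m + 1) := fun x => Equiv.swap (e t') 0 (e x)
    have hf : Function.Injective f := (Equiv.swap (e t') 0).injective.comp e.injective
    have hft' : f t' = 0 := by simp [f]
    have keyd : ∀ w : MvPolynomial { x // x ∈ u } R,
        MvPolynomial.degreeOf t (MvPolynomial.rename (↑) w) =
          (MvPolynomial.finSuccEquiv R m (MvPolynomial.rename f w)).natDegree := by
      intro w
      rw [MvPolynomial.natDegree_finSuccEquiv]
      have h1 : MvPolynomial.degreeOf (Subtype.val t') (MvPolynomial.rename Subtype.val w) =
          MvPolynomial.degreeOf t' w :=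
        MvPolynomial.degreeOf_rename_of_injective Subtype.val_injective t'
      have h2 : MvPolynomial.degreeOf (f t') (MvPolynomial.rename f w) =
          MvPolynomial.degreeOf t' w :=
        MvPolynomial.degreeOf_rename_of_injective hf t'
      rw [hft'] at h2
      rw [h2, ← h1]
    have hp' : p' ≠ 0 := fun hh => hp (by rw [hh, map_zero])
    have hq' : q' ≠ 0 := fun hh => hq (by rw [hh, map_zero])
    have hp2 : MvPolynomial.finSuccEquiv R m (MvPolynomial.rename f p') ≠ 0 := by
      simp only [ne_eq, EmbeddingLike.map_eq_zero_iff]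
      exact fun hh => hp' (MvPolynomial.rename_injective f hf (by rw [hh, map_zero]))
    have hq2 : MvPolynomial.finSuccEquiv R m (MvPolynomial.rename f q') ≠ 0 := by
      simp only [ne_eq, EmbeddingLike.map_eq_zero_iff]
      exact fun hh => hq' (MvPolynomial.rename_injective f hf (by rw [hh, map_zero]))
    rw [← map_mul, keyd, keyd, keyd, map_mul, map_mul]
    exact Polynomial.natDegree_mul hp2 hq2
  · have keyd : ∀ w : MvPolynomial { x // x ∈ u } R,
        MvPolynomial.degreeOf t (MvPolynomial.rename (↑) w) = 0 := by
      intro w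
      rw [MvPolynomial.degreeOf, MvPolynomial.degrees_rename_of_injective Subtype.val_injective]
      rw [Multiset.count_eq_zero]
      intro hmem
      obtain ⟨x, _, hx⟩ := Multiset.mem_map.1 hmem
      exact ht (hx ▸ x.2)
    rw [← map_mul, keyd, keyd, keyd]

theorem degreeOf_prod_eq' {ι : Type*} (t : σ) (u : Finset ι) (f : ι → MvPolynomial σ R)
    (h : ∏ i ∈ u, f i ≠ 0) :
    MvPolynomial.degreeOf t (∏ i ∈ u, f i) = ∑ i ∈ u, MvPolynomial.degreeOf t (f i) := by
  classical
  induction u using Finset.cons_induction with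
  | empty => rw [Finset.prod_empty, Finset.sum_empty, ← MvPolynomial.C_1, MvPolynomial.degreeOf_C]
  | cons a u ha ih =>
    rw [Finset.prod_cons] at h ⊢
    obtain ⟨h1, h2⟩ := mul_ne_zero_iff.1 h
    rw [degreeOf_mul_eq' t _ _ h, ih h2, Finset.sum_cons]

open MvPolynomial in
lemma coeff_single_X' (t m : σ) (h : m ≠ t) :
    coeff (Finsupp.single t 1) (X m : MvPolynomial σ R) = 0 := by
  classical
  rw [coeff_X', if_neg]
  intro hc
  exact h ((Finsupp.single_left_inj one_ne_zero).1 hc)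

open MvPolynomial in
lemma degLin_le (t j j' : σ) (u : R) :
    degreeOf t ((X j : MvPolynomial σ R) - C u * X j') ≤ 1 := by
  refine le_trans (degreeOf_sub_le t _ _) ?_
  apply max_le
  · rw [degreeOf_X]; split <;> omega
  · refine le_trans (degreeOf_mul_le _ _ _) ?_
    rw [degreeOf_C, degreeOf_X]
    split <;> omega

open MvPolynomial in
lemma degLin1 (t : σ) (u : R) (h : (X t : MvPolynomial σ R) - C u * X t ≠ 0) :
    degreeOf t ((X t : MvPolynomial σ R) - C u * X t) = 1 := by
  have he : (X t : MvPolynomial σ R) - C u * X t = C (1 - u) * X t := by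
    rw [map_sub, C_1, sub_mul, one_mul]
  rw [he] at h ⊢
  rw [degreeOf_mul_eq' t _ _ h, degreeOf_C, degreeOf_X, if_pos rfl]

open MvPolynomial in
lemma degLin2 (t m : σ) (u : R) (hm : m ≠ t) :
    degreeOf t ((X t : MvPolynomial σ R) - C u * X m) = 1 := by
  refine le_antisymm (degLin_le t t m u) ?_
  have hc : coeff (Finsupp.single t 1) ((X t : MvPolynomial σ R) - C u * X m) = 1 := by
    rw [coeff_sub, coeff_C_mul, coeff_single_X' t m hm, coeff_X, mul_zero, sub_zero, if_pos rfl]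
  have hmem : (Finsupp.single t 1) ∈ ((X t : MvPolynomial σ R) - C u * X m).support := by
    rw [mem_support_iff, hc]; exact one_ne_zero
  simpa using monomial_le_degreeOf t hmem

open MvPolynomial in
lemma degLin3 (t m : σ) (u : R) (hm : m ≠ t) (hu : u ≠ 0) :
    degreeOf t ((X m : MvPolynomial σ R) - C u * X t) = 1 := by
  refine le_antisymm (degLin_le t m t u) ?_
  have hc : coeff (Finsupp.single t 1) ((X m : MvPolynomial σ R) - C u * X t) = -u := by
    rw [coeff_sub, coeff_C_mul, coeff_single_X' t m hm, coeff_X, if_pos rfl, mul_one, zero_sub]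
  have hmem : (Finsupp.single t 1) ∈ ((X m : MvPolynomial σ R) - C u * X t).support := by
    rw [mem_support_iff, hc]; exact neg_ne_zero.2 hu
  simpa using monomial_le_degreeOf t hmem

open MvPolynomial in
lemma degLin4 (t m m' : σ) (u : R) (hm : m ≠ t) (hm' : m' ≠ t) :
    degreeOf t ((X m : MvPolynomial σ R) - C u * X m') = 0 := by
  refine Nat.le_zero.1 ?_
  refine le_trans (degreeOf_sub_le t _ _) ?_
  apply max_le
  · rw [degreeOf_X, if_neg (Ne.symm hm)]
  · refine le_trans (degreeOf_mul_le _ _ _) ?_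
    rw [degreeOf_C, degreeOf_X, if_neg (Ne.symm hm')]

end DegGeneric

lemma sum_pairs (I : Finset ℕ) (G : ℕ → ℕ → ℕ) (hdiag : ∀ x ∈ I, G x x = 0) :
    ∑ j ∈ I, ∑ i ∈ I.filter (· < j), (G i j + G j i) = ∑ j ∈ I, ∑ i ∈ I, G i j := by
  have h1 : ∀ j ∈ I, ∑ i ∈ I.filter (· < j), (G i j + G j i)
      = (∑ i ∈ I, if i < j then G i j else 0) + ∑ i ∈ I, if i < j then G j i else 0 := by
    intro j _
    rw [Finset.sum_filter, ← Finset.sum_add_distrib]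
    refine Finset.sum_congr rfl fun i _ => ?_
    split <;> simp
  rw [Finset.sum_congr rfl h1, Finset.sum_add_distrib]
  have h2 : ∑ j ∈ I, ∑ i ∈ I, (if i < j then G j i else 0)
      = ∑ j ∈ I, ∑ i ∈ I, (if j < i then G i j else 0) := by
    rw [Finset.sum_comm]
  rw [h2, ← Finset.sum_add_distrib]
  refine Finset.sum_congr rfl fun j hj => ?_
  rw [← Finset.sum_add_distrib]
  refine Finset.sum_congr rfl fun i hi => ?_
  rcases lt_trichotomy i j with h | h | h
  · rw [if_pos h, if_neg (by omega), add_zero]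
  · subst h; simp [hdiag i hi]
  · rw [if_neg (by omega), if_pos h, zero_add]

/-- indicator that column `j` is sent to the variable `x_{r s}`. -/
def chi (s : ℕ) (r : ℕ → ℕ) (j : ℕ) : ℕ :=
  if (∃ i, i < s ∧ r i = j) ∨ j = r s then 1 else 0

lemma chi_le_one (s : ℕ) (r : ℕ → ℕ) (j : ℕ) : chi s r j ≤ 1 := by
  unfold chi; split <;> omega

lemma EPol_of_Rv (s : ℕ) (r : ℕ → ℕ) (j : ℕ) (h : (∃ i, i < s ∧ r i = j) ∨ j = r s) :
    EPol s r j = MvPolynomial.X (r s) := by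
  unfold EPol
  split_ifs with h'
  · rfl
  · rcases h with h | h
    · exact absurd h h'
    · rw [h]

lemma EPol_of_not_Rv (s : ℕ) (r : ℕ → ℕ) (j : ℕ) (h : ¬ ((∃ i, i < s ∧ r i = j) ∨ j = r s)) :
    EPol s r j = MvPolynomial.X j ∧ j ≠ r s := by
  obtain ⟨h1, h2⟩ := not_or.1 h
  exact ⟨by unfold EPol; rw [if_neg h1], h2⟩

lemma chi_of_Rv (s : ℕ) (r : ℕ → ℕ) (j : ℕ) (h : (∃ i, i < s ∧ r i = j) ∨ j = r s) :
    chi s r j = 1 := by unfold chi; rw [if_pos h]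

lemma chi_of_not_Rv (s : ℕ) (r : ℕ → ℕ) (j : ℕ) (h : ¬ ((∃ i, i < s ∧ r i = j) ∨ j = r s)) :
    chi s r j = 0 := by unfold chi; rw [if_neg h]

lemma deg_LL (s : ℕ) (r k : ℕ → ℕ) (γ : ℤ) (i' j' : ℕ) (h : LL s r k γ i' j' ≠ 0) :
    MvPolynomial.degreeOf (r s) (LL s r k γ i' j') = max (chi s r i') (chi s r j') := by
  unfold LL at h ⊢
  set u := q0 ^ (γ + eE s r k i' - eE s r k j') with hu
  have hune : u ≠ 0 := zpow_ne_zero _ q0_ne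
  by_cases hi : (∃ i, i < s ∧ r i = i') ∨ i' = r s <;>
    by_cases hj : (∃ i, i < s ∧ r i = j') ∨ j' = r s
  · rw [EPol_of_Rv s r i' hi, EPol_of_Rv s r j' hj] at h ⊢
    rw [chi_of_Rv s r i' hi, chi_of_Rv s r j' hj, degLin1 (r s) u h]; simp
  · obtain ⟨hEj, hjne⟩ := EPol_of_not_Rv s r j' hj
    rw [EPol_of_Rv s r i' hi, hEj]
    rw [chi_of_Rv s r i' hi, chi_of_not_Rv s r j' hj, degLin3 (r s) j' u hjne hune]; simp
  · obtain ⟨hEi, hine⟩ := EPol_of_not_Rv s r i' hi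
    rw [EPol_of_Rv s r j' hj, hEi]
    rw [chi_of_not_Rv s r i' hi, chi_of_Rv s r j' hj, degLin2 (r s) i' u hine]; simp
  · obtain ⟨hEj, hjne⟩ := EPol_of_not_Rv s r j' hj
    obtain ⟨hEi, hine⟩ := EPol_of_not_Rv s r i' hi
    rw [hEi, hEj]
    rw [chi_of_not_Rv s r i' hi, chi_of_not_Rv s r j' hj, degLin4 (r s) j' i' u hjne hine]; simp

lemma deg_EPol (s : ℕ) (r : ℕ → ℕ) (j : ℕ) :
    MvPolynomial.degreeOf (r s) (EPol s r j) = chi s r j := by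
  by_cases hj : (∃ i, i < s ∧ r i = j) ∨ j = r s
  · rw [EPol_of_Rv s r j hj, chi_of_Rv s r j hj, MvPolynomial.degreeOf_X, if_pos rfl]
  · obtain ⟨hEj, hjne⟩ := EPol_of_not_Rv s r j hj
    rw [hEj, chi_of_not_Rv s r j hj, MvPolynomial.degreeOf_X, if_neg (Ne.symm hjne)]

lemma prod_factor_ne {ι : Type*} {u : Finset ι} {f : ι → PP} (h : ∏ i ∈ u, f i ≠ 0)
    {i : ι} (hi : i ∈ u) : f i ≠ 0 :=
  fun h0 => h (Finset.prod_eq_zero hi h0)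

theorem count_main (n s b : ℕ) (a r k : ℕ → ℕ) (hs : 1 ≤ s) (hsn : s < n)
    (hr0 : r 0 = 0) (hrmono : ∀ i, i < s → r i < r (i+1)) (hrn : r s ≤ n)
    (hN : NN n s b a r k ≠ 0) (hD : DD n s b a r k ≠ 0) :
    MvPolynomial.degreeOf (r s) (NN n s b a r k) + (n - s) * b =
      MvPolynomial.degreeOf (r s) (DD n s b a r k) + (n - s) * (∑ i' ∈ Icc 1 s, a (r i')) := by
  classical
  set t := r s with ht
  set χ := chi s r with hχ
  -- strict monotonicity
  have hlt : ∀ i i' : ℕ, i < i' → i' ≤ s → r i < r i' := by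
    intro i i' h h'
    induction i' with
    | zero => omega
    | succ m ih =>
      rcases Nat.lt_succ_iff_lt_or_eq.1 h with h2 | h2
      · exact lt_trans (ih h2 (by omega)) (hrmono m (by omega))
      · subst h2; exact hrmono i (by omega)
  have hRv0 : (∃ i0, i0 < s ∧ r i0 = 0) ∨ (0:ℕ) = r s := Or.inl ⟨0, hs, hr0⟩
  have hr_mem : ∀ i, 1 ≤ i → i ≤ s → r i ∈ Icc 1 n := by
    intro i h1 h2
    rw [mem_Icc]
    constructor
    · have := hlt 0 i (by omega) h2
      omega
    · rcases lt_or_eq_of_le h2 with h3 | h3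
      · exact le_trans (le_of_lt (hlt i s h3 le_rfl)) hrn
      · rw [h3]; exact hrn
  have hinj : ∀ x ∈ Icc 1 s, ∀ y ∈ Icc 1 s, r x = r y → x = y := by
    intro x hx y hy hxy
    rw [mem_Icc] at hx hy
    rcases lt_trichotomy x y with h | h | h
    · exact absurd hxy (ne_of_lt (hlt x y h hy.2))
    · exact h
    · exact absurd hxy.symm (ne_of_lt (hlt y x h hx.2))
  have hRset : (Icc 1 n).filter (fun j => (∃ i0, i0 < s ∧ r i0 = j) ∨ j = r s) =
      (Icc 1 s).image r := by
    ext j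
    rw [mem_filter, mem_image]
    constructor
    · rintro ⟨hjI, (⟨i0, hi0, rfl⟩ | rfl)⟩
      · have h1 : 1 ≤ i0 := by
          by_contra h2
          have : i0 = 0 := by omega
          rw [this, hr0] at hjI
          rw [mem_Icc] at hjI; omega
        exact ⟨i0, mem_Icc.2 ⟨h1, le_of_lt hi0⟩, rfl⟩
      · exact ⟨s, mem_Icc.2 ⟨hs, le_rfl⟩, rfl⟩
    · rintro ⟨i, hi, rfl⟩
      rw [mem_Icc] at hi
      refine ⟨hr_mem i hi.1 hi.2, ?_⟩
      rcases lt_or_eq_of_le hi.2 with h3 | h3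
      · exact Or.inl ⟨i, h3, rfl⟩
      · rw [h3]; exact Or.inr rfl
  have hcardR : ((Icc 1 n).filter (fun j => (∃ i0, i0 < s ∧ r i0 = j) ∨ j = r s)).card = s := by
    rw [hRset, Finset.card_image_of_injOn hinj, Nat.card_Icc]
    omega
  have hcardF : ((Icc 1 n).filter (fun j => ¬ ((∃ i0, i0 < s ∧ r i0 = j) ∨ j = r s))).card
      = n - s := by
    rw [Finset.filter_not, Finset.card_sdiff_of_subset (Finset.filter_subset _ _), hcardR, Nat.card_Icc]
    omega
  have hAval : ∑ j ∈ (Icc 1 n).filter (fun j => (∃ i0, i0 < s ∧ r i0 = j) ∨ j = r s), a j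
      = ∑ i' ∈ Icc 1 s, a (r i') := by
    rw [hRset, Finset.sum_image hinj]
  have hDJb : ∀ j ∈ Icc 1 n, ¬ ((∃ i0, i0 < s ∧ r i0 = j) ∨ j = r s) →
      (DJ s b r k j).card = b := by
    intro j _ hRv
    have hDJ : DJ s b r k j = Icc 1 b := by
      unfold DJ
      ext c
      simp only [Finset.mem_filter]
      constructor
      · rintro ⟨h1, _⟩; exact h1
      · intro h1
        refine ⟨h1, ?_⟩
        rintro ⟨i, hi, hri, _⟩
        rw [mem_Icc] at hi
        rcases lt_or_eq_of_le hi.2 with h3 | h3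
        · exact hRv (Or.inl ⟨i, h3, hri⟩)
        · rw [h3] at hri; exact hRv (Or.inr hri.symm)
    rw [hDJ, Nat.card_Icc]
    omega
  have hIoo : ∀ j ∈ Icc 1 n, Ioo 0 j = (Icc 1 n).filter (· < j) := by
    intro j hj
    rw [mem_Icc] at hj
    ext i
    simp only [mem_Ioo, mem_filter, mem_Icc]
    omega
  have hchi0 : χ 0 = 1 := chi_of_Rv s r 0 hRv0
  -- degree of NN
  have hNsplit : NN n s b a r k =
      (∏ j ∈ Icc 1 n, ((∏ c ∈ range (a j), LL s r k ((c:ℤ)+1) j 0) *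
        ∏ _c ∈ DJ s b r k j, EPol s r j)) *
      ∏ j ∈ Icc 1 n, ∏ i ∈ Ioo 0 j, ((∏ c ∈ range (a i), LL s r k (c:ℤ) i j) *
        ∏ c ∈ range (a j), LL s r k ((c:ℤ)+1) j i) := rfl
  have hDsplit : DD n s b a r k =
      (∏ j ∈ Icc 1 n, ((∏ _c ∈ range (a j), EPol s r 0) *
        ∏ c ∈ DJ s b r k j, LL s r k (-(c:ℤ)) 0 j)) *
      ∏ j ∈ Icc 1 n, ∏ i ∈ Ioo 0 j, ((∏ _c ∈ range (a i), EPol s r j) *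
        ∏ _c ∈ range (a j), EPol s r i) := rfl
  rw [hNsplit] at hN
  rw [hDsplit] at hD
  obtain ⟨hN1, hN2⟩ := mul_ne_zero_iff.1 hN
  obtain ⟨hD1, hD2⟩ := mul_ne_zero_iff.1 hD
  have hdegN : MvPolynomial.degreeOf t (NN n s b a r k) =
      (∑ j ∈ Icc 1 n, (a j + (DJ s b r k j).card * χ j)) +
      ∑ j ∈ Icc 1 n, ∑ i ∈ Ioo 0 j,
        (a i * max (χ i) (χ j) + a j * max (χ j) (χ i)) := by
    rw [hNsplit, degreeOf_mul_eq' t _ _ hN, degreeOf_prod_eq' t _ _ hN1,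
      degreeOf_prod_eq' t _ _ hN2]
    congr 1
    · refine Finset.sum_congr rfl fun j hj => ?_
      have hgrp := prod_factor_ne hN1 hj
      obtain ⟨hg1, hg2⟩ := mul_ne_zero_iff.1 hgrp
      rw [degreeOf_mul_eq' t _ _ hgrp, degreeOf_prod_eq' t _ _ hg1,
        degreeOf_prod_eq' t _ _ hg2]
      have e1 : ∀ c ∈ range (a j),
          MvPolynomial.degreeOf t (LL s r k ((c:ℤ)+1) j 0) = 1 := by
        intro c hc
        rw [ht, deg_LL s r k _ j 0 (prod_factor_ne hg1 hc)]
        rw [show chi s r 0 = 1 from chi_of_Rv s r 0 hRv0]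
        exact max_eq_right (chi_le_one s r j)
      have e2 : ∀ c ∈ DJ s b r k j,
          MvPolynomial.degreeOf t (EPol s r j) = χ j := fun c _ => by
        rw [ht, deg_EPol s r j, hχ]
      rw [Finset.sum_congr rfl e1, Finset.sum_congr rfl e2, Finset.sum_const,
        Finset.sum_const, card_range, smul_eq_mul, mul_one, smul_eq_mul]
    · refine Finset.sum_congr rfl fun j hj => ?_
      have hrow := prod_factor_ne hN2 hj
      rw [degreeOf_prod_eq' t _ _ hrow]
      refine Finset.sum_congr rfl fun i hi => ?_
      have hgrp := prod_factor_ne hrow hi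
      obtain ⟨hg1, hg2⟩ := mul_ne_zero_iff.1 hgrp
      rw [degreeOf_mul_eq' t _ _ hgrp, degreeOf_prod_eq' t _ _ hg1,
        degreeOf_prod_eq' t _ _ hg2]
      have e1 : ∀ c ∈ range (a i),
          MvPolynomial.degreeOf t (LL s r k (c:ℤ) i j) = max (χ i) (χ j) := by
        intro c hc
        rw [ht, deg_LL s r k _ i j (prod_factor_ne hg1 hc), hχ]
      have e2 : ∀ c ∈ range (a j),
          MvPolynomial.degreeOf t (LL s r k ((c:ℤ)+1) j i) = max (χ j) (χ i) := by
        intro c hc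
        rw [ht, deg_LL s r k _ j i (prod_factor_ne hg2 hc), hχ]
      rw [Finset.sum_congr rfl e1, Finset.sum_congr rfl e2, Finset.sum_const,
        Finset.sum_const, card_range, card_range, smul_eq_mul, smul_eq_mul]
  have hdegD : MvPolynomial.degreeOf t (DD n s b a r k) =
      (∑ j ∈ Icc 1 n, (a j + (DJ s b r k j).card)) +
      ∑ j ∈ Icc 1 n, ∑ i ∈ Ioo 0 j, (a i * χ j + a j * χ i) := by
    rw [hDsplit, degreeOf_mul_eq' t _ _ hD, degreeOf_prod_eq' t _ _ hD1,
      degreeOf_prod_eq' t _ _ hD2]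
    congr 1
    · refine Finset.sum_congr rfl fun j hj => ?_
      have hgrp := prod_factor_ne hD1 hj
      obtain ⟨hg1, hg2⟩ := mul_ne_zero_iff.1 hgrp
      rw [degreeOf_mul_eq' t _ _ hgrp, degreeOf_prod_eq' t _ _ hg1,
        degreeOf_prod_eq' t _ _ hg2]
      have e1 : ∀ c ∈ range (a j), MvPolynomial.degreeOf t (EPol s r 0) = 1 := by
        intro c _
        rw [ht, deg_EPol s r 0, chi_of_Rv s r 0 hRv0]
      have e2 : ∀ c ∈ DJ s b r k j,
          MvPolynomial.degreeOf t (LL s r k (-(c:ℤ)) 0 j) = 1 := by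
        intro c hc
        rw [ht, deg_LL s r k _ 0 j (prod_factor_ne hg2 hc)]
        rw [show chi s r 0 = 1 from chi_of_Rv s r 0 hRv0]
        exact max_eq_left (chi_le_one s r j)
      rw [Finset.sum_congr rfl e1, Finset.sum_congr rfl e2, Finset.sum_const,
        Finset.sum_const, card_range, smul_eq_mul, mul_one, smul_eq_mul, mul_one]
    · refine Finset.sum_congr rfl fun j hj => ?_
      have hrow := prod_factor_ne hD2 hj
      rw [degreeOf_prod_eq' t _ _ hrow]
      refine Finset.sum_congr rfl fun i hi => ?_
      have hgrp := prod_factor_ne hrow hi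
      obtain ⟨hg1, hg2⟩ := mul_ne_zero_iff.1 hgrp
      rw [degreeOf_mul_eq' t _ _ hgrp, degreeOf_prod_eq' t _ _ hg1,
        degreeOf_prod_eq' t _ _ hg2]
      have e1 : ∀ c ∈ range (a i), MvPolynomial.degreeOf t (EPol s r j) = χ j :=
        fun c _ => by rw [ht, deg_EPol s r j, hχ]
      have e2 : ∀ c ∈ range (a j), MvPolynomial.degreeOf t (EPol s r i) = χ i :=
        fun c _ => by rw [ht, deg_EPol s r i, hχ]
      rw [Finset.sum_congr rfl e1, Finset.sum_congr rfl e2, Finset.sum_const,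
        Finset.sum_const, card_range, card_range, smul_eq_mul, smul_eq_mul]
  have fact1 : ∑ j ∈ Icc 1 n, (DJ s b r k j).card
      = (∑ j ∈ Icc 1 n, (DJ s b r k j).card * χ j) + (n - s) * b := by
    rw [← Finset.sum_filter_add_sum_filter_not (Icc 1 n)
      (fun j => (∃ i0, i0 < s ∧ r i0 = j) ∨ j = r s) (fun j => (DJ s b r k j).card)]
    congr 1
    · rw [Finset.sum_filter]
      refine Finset.sum_congr rfl fun j _ => ?_
      by_cases hRv : (∃ i0, i0 < s ∧ r i0 = j) ∨ j = r s
      · rw [if_pos hRv, hχ, chi_of_Rv s r j hRv, mul_one]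
      · rw [if_neg hRv, hχ, chi_of_not_Rv s r j hRv, mul_zero]
    · have hc : ∀ j ∈ (Icc 1 n).filter (fun j => ¬ ((∃ i0, i0 < s ∧ r i0 = j) ∨ j = r s)),
          (DJ s b r k j).card = b := by
        intro j hj
        rw [Finset.mem_filter] at hj
        exact hDJb j hj.1 hj.2
      rw [Finset.sum_congr rfl hc, Finset.sum_const, hcardF, smul_eq_mul]
  have fact2 : ∑ j ∈ Icc 1 n, ∑ i ∈ Ioo 0 j,
        (a i * max (χ i) (χ j) + a j * max (χ j) (χ i))
      = (∑ j ∈ Icc 1 n, ∑ i ∈ Ioo 0 j, (a i * χ j + a j * χ i))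
        + (n - s) * (∑ i' ∈ Icc 1 s, a (r i')) := by
    set G : ℕ → ℕ → ℕ := fun x y =>
      if ((∃ i0, i0 < s ∧ r i0 = x) ∨ x = r s) ∧ ¬ ((∃ i0, i0 < s ∧ r i0 = y) ∨ y = r s)
      then a x else 0 with hG
    have hpt : ∀ j ∈ Icc 1 n, ∀ i ∈ Ioo 0 j,
        a i * max (χ i) (χ j) + a j * max (χ j) (χ i)
          = (a i * χ j + a j * χ i) + (G i j + G j i) := by
      intro j _ i _
      by_cases hi : (∃ i0, i0 < s ∧ r i0 = i) ∨ i = r s <;>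
        by_cases hj : (∃ i0, i0 < s ∧ r i0 = j) ∨ j = r s
      · have g1 : G i j = 0 := by simp only [hG]; exact if_neg (fun h => h.2 hj)
        have g2 : G j i = 0 := by simp only [hG]; exact if_neg (fun h => h.2 hi)
        rw [hχ, chi_of_Rv s r i hi, chi_of_Rv s r j hj, g1, g2]
        simp
      · have g1 : G i j = a i := by simp only [hG]; exact if_pos ⟨hi, hj⟩
        have g2 : G j i = 0 := by simp only [hG]; exact if_neg (fun h => hj h.1)
        rw [hχ, chi_of_Rv s r i hi, chi_of_not_Rv s r j hj, g1, g2]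
        simp [Nat.add_comm]
      · have g1 : G i j = 0 := by simp only [hG]; exact if_neg (fun h => hi h.1)
        have g2 : G j i = a j := by simp only [hG]; exact if_pos ⟨hj, hi⟩
        rw [hχ, chi_of_not_Rv s r i hi, chi_of_Rv s r j hj, g1, g2]
        simp [Nat.add_comm]
      · have g1 : G i j = 0 := by simp only [hG]; exact if_neg (fun h => hi h.1)
        have g2 : G j i = 0 := by simp only [hG]; exact if_neg (fun h => hj h.1)
        rw [hχ, chi_of_not_Rv s r i hi, chi_of_not_Rv s r j hj, g1, g2]
        simp
    rw [Finset.sum_congr rfl (fun j hj => Finset.sum_congr rfl (hpt j hj))]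
    have hsplit : ∀ j ∈ Icc 1 n,
        ∑ i ∈ Ioo 0 j, ((a i * χ j + a j * χ i) + (G i j + G j i))
          = (∑ i ∈ Ioo 0 j, (a i * χ j + a j * χ i)) + ∑ i ∈ Ioo 0 j, (G i j + G j i) :=
      fun j _ => Finset.sum_add_distrib
    rw [Finset.sum_congr rfl hsplit, Finset.sum_add_distrib]
    congr 1
    rw [Finset.sum_congr rfl (fun j hj => by rw [hIoo j hj])]
    rw [sum_pairs (Icc 1 n) G (fun x _ => by simp only [hG]; exact if_neg (fun h => h.2 h.1))]
    rw [Finset.sum_comm]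
    have hper : ∀ i ∈ Icc 1 n, ∑ j ∈ Icc 1 n, G i j =
        if (∃ i0, i0 < s ∧ r i0 = i) ∨ i = r s then (n - s) * a i else 0 := by
      intro i _
      by_cases hi : (∃ i0, i0 < s ∧ r i0 = i) ∨ i = r s
      · rw [if_pos hi]
        have hGj : ∀ j ∈ Icc 1 n, G i j =
            if ¬ ((∃ i0, i0 < s ∧ r i0 = j) ∨ j = r s) then a i else 0 := by
          intro j _
          by_cases hj : (∃ i0, i0 < s ∧ r i0 = j) ∨ j = r s
          · simp only [hG]
            rw [if_neg (fun h => h.2 hj), if_neg (not_not_intro hj)]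
          · simp only [hG]
            rw [if_pos ⟨hi, hj⟩, if_pos hj]
        rw [Finset.sum_congr rfl hGj, ← Finset.sum_filter, Finset.sum_const, hcardF,
          smul_eq_mul]
      · rw [if_neg hi]
        refine Finset.sum_eq_zero fun j _ => ?_
        simp only [hG]
        exact if_neg (fun h => hi h.1)
    rw [Finset.sum_congr rfl hper, ← Finset.sum_filter, ← Finset.mul_sum, hAval]
  rw [hdegN, hdegD, Finset.sum_add_distrib, Finset.sum_add_distrib, fact1, fact2]
  ring


/-- Properness (part of the proof of property (ii) of Lemma 4.1 of Gessel–Xin):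
with `r 0 = k 0 = 0`, `0 < r 1 < ⋯ < r s ≤ n`, `s < n`, `1 ≤ k i ≤ b`, if
`k i > a_{r 1} + ⋯ + a_{r s}` for some `i`, then `𝒬(b ∣ 𝐫; 𝐤)` is a proper
rational function of `x_{r s}`: its degree in `x_{r s}` (numerator degree minus
denominator degree) equals `(n - s)(a_{r 1} + ⋯ + a_{r s} - b)`, which is
negative. -/
theorem stmt19 (n s b : ℕ) (a r k : ℕ → ℕ) (hs : 1 ≤ s) (hsn : s < n) (hb : 0 < b)
    (hr0 : r 0 = 0) (hk0 : k 0 = 0)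
    (hrmono : ∀ i, i < s → r i < r (i+1)) (hrn : r s ≤ n)
    (hk : ∀ i ∈ Icc 1 s, 1 ≤ k i ∧ k i ≤ b)
    (hex : ∃ i ∈ Icc 1 s, (∑ i' ∈ Icc 1 s, a (r i')) < k i) :
    ∃ N D : MvPolynomial ℕ (RatFunc ℚ), D ≠ 0 ∧
      Qrk n s b a r k =
        algebraMap (MvPolynomial ℕ (RatFunc ℚ)) FF N /
          algebraMap (MvPolynomial ℕ (RatFunc ℚ)) FF D ∧
      (N.degreeOf (r s) : ℤ) - (D.degreeOf (r s) : ℤ) =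
        ((n : ℤ) - s) * ((∑ i' ∈ Icc 1 s, (a (r i') : ℤ)) - b) ∧
      ((n : ℤ) - s) * ((∑ i' ∈ Icc 1 s, (a (r i') : ℤ)) - b) < 0 := by
  classical
  obtain ⟨i0, hi0, hAlt⟩ := hex
  have hAb : (∑ i' ∈ Icc 1 s, a (r i')) < b := lt_of_lt_of_le hAlt (hk i0 hi0).2
  have hcastA : (∑ i' ∈ Icc 1 s, (a (r i') : ℤ)) = ((∑ i' ∈ Icc 1 s, a (r i') : ℕ) : ℤ) := by
    push_cast
    rfl
  have hneg : ((n : ℤ) - s) * ((∑ i' ∈ Icc 1 s, (a (r i') : ℤ)) - b) < 0 := by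
    apply mul_neg_of_pos_of_neg
    · have h1 : (s:ℤ) < (n:ℤ) := by exact_mod_cast hsn
      linarith
    · rw [hcastA]
      have h2 : ((∑ i' ∈ Icc 1 s, a (r i') : ℕ) : ℤ) < (b : ℤ) := by exact_mod_cast hAb
      linarith
  by_cases hQ : Qrk n s b a r k = 0
  · set m := (n - s) * (b - ∑ i' ∈ Icc 1 s, a (r i')) with hm
    refine ⟨0, MvPolynomial.X (r s) ^ m, pow_ne_zero _ (MvPolynomial.X_ne_zero _), ?_, ?_, hneg⟩
    · rw [hQ, map_zero, zero_div]
    · have hpow : (MvPolynomial.X (r s) : PP) ^ m = ∏ _c ∈ range m, MvPolynomial.X (r s) := by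
        rw [Finset.prod_const, card_range]
      have hdeg : ((MvPolynomial.X (r s) : PP) ^ m).degreeOf (r s) = m := by
        rw [hpow, degreeOf_prod_eq' _ _ _
          (by rw [← hpow]; exact pow_ne_zero _ (MvPolynomial.X_ne_zero _))]
        rw [Finset.sum_congr rfl
          (fun c _ => by rw [MvPolynomial.degreeOf_X, if_pos rfl])]
        rw [Finset.sum_const, card_range, smul_eq_mul, mul_one]
      rw [hdeg, MvPolynomial.degreeOf_zero, hcastA, hm]
      push_cast [Nat.cast_sub (le_of_lt hAb), Nat.cast_sub (le_of_lt hsn)]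
      ring
  · have hrep := qrk_eq n s b a r k
    have hDne : DD n s b a r k ≠ 0 := by
      intro h0; exact hQ (by rw [hrep, h0, map_zero, div_zero])
    have hNne : NN n s b a r k ≠ 0 := by
      intro h0; exact hQ (by rw [hrep, h0, map_zero, zero_div])
    have hcount := count_main n s b a r k hs hsn hr0 hrmono hrn hNne hDne
    refine ⟨NN n s b a r k, DD n s b a r k, hDne, hrep, ?_, hneg⟩
    have hc' : ((NN n s b a r k).degreeOf (r s) : ℤ) + ((n:ℤ) - s) * b
        = ((DD n s b a r k).degreeOf (r s) : ℤ)
          + ((n:ℤ) - s) * (∑ i' ∈ Icc 1 s, (a (r i') : ℤ)) := by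
      have := hcount
      have hcast := congrArg (fun x : ℕ => (x : ℤ)) this
      push_cast [Nat.cast_sub (le_of_lt hsn)] at hcast
      linarith
    have hexp : ((n:ℤ) - s) * ((∑ i' ∈ Icc 1 s, (a (r i') : ℤ)) - b)
        = ((n:ℤ) - s) * (∑ i' ∈ Icc 1 s, (a (r i') : ℤ)) - ((n:ℤ) - s) * b := by ring
    rw [hexp]
    linarith


end
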